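/- Let (Ω, ℬ, μ) be a probability space and S = {x₁, …, x_n} a finite index set. For each m ≥ 1, let 𝒯_m ⊂ (0,1) be a finite set of quantile levels with 𝒯_m ⊆ 𝒯_{m+1}, and suppose ∪_{m=1}^∞ 𝒯_m is dense in [0,1]. Let D be the space of distribution functions on [0,1] with the Lévy metric, and let F^m : Ω → D^S be Borel measurable maps (D^S equipped with the supremum Lévy metric d_{L_u}) such that for every ω ∈ Ω, all m ≤ n, every x ∈ S, and every τ ∈ 𝒯_m there exists a point y with F_x^m(ω)(y) = F_x^n(ω)(y) = τ. Then there exists a Borel probability measure μ_∞ on D^S such that the pushforward measures μ_m = (F^m)_*μ converge to μ_∞ in the Prokhorov metric induced by d_{L_u}; that is, the joint law of the dependent quantile pyramids at the finite set of covariate values {x₁, …, x_n} exists as the limit of the finite-level constructions. -/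

import Mathlib

open MeasureTheory Filter Set
open scoped Topology

/-- A distribution function on `[0,1]`: nondecreasing, right-continuous, with values in `[0,1]`,
equal to `0` below `0` and equal to `1` from `1` on. -/
def IsDistFunOn01 (F : ℝ → ℝ) : Prop :=
  Monotone F ∧ (∀ y : ℝ, ContinuousWithinAt F (Set.Ici y) y) ∧
    (∀ y : ℝ, F y ∈ Set.Icc (0 : ℝ) 1) ∧ (∀ y : ℝ, y < 0 → F y = 0) ∧
    (∀ y : ℝ, 1 ≤ y → F y = 1)

/-- The Lévy distance between two (distribution) functions:
`d_L(F,G) = inf {ε > 0 : F(y − ε) − ε ≤ G(y) ≤ F(y + ε) + ε for all y}`. -/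
noncomputable def levyDist (F G : ℝ → ℝ) : ℝ :=
  sInf {ε : ℝ | 0 < ε ∧ ∀ y : ℝ, F (y - ε) - ε ≤ G y ∧ G y ≤ F (y + ε) + ε}

/-- The space `D` of all distribution functions on `[0,1]`. -/
def DistFun01 : Type := {F : ℝ → ℝ // IsDistFunOn01 F}

/-- Suppose `D^S`, the space of `S`-indexed families of distribution functions on `[0,1]` for a
finite nonempty index set `S`, is equipped with the supremum Lévy metric
`d_{L_u}(F, G) = max_{x ∈ S} d_L(F_x, G_x)`, and `F^m : Ω → D^S` are Borel measurable maps such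
that, for all `ω` and all `x ∈ S`, any `F_x^m(ω)` and `F_x^n(ω)` with `1 ≤ m ≤ n` share a point
realizing each quantile level `τ ∈ 𝒯_m`, where the finite sets `𝒯_m ⊂ (0,1)` are nested with
union dense in `[0,1]`.  Then the pushforward probability measures `μ_m = (F^m)_*μ` converge,
in the Prokhorov metric induced by `d_{L_u}`, to some Borel probability measure `μ_∞` on `D^S`:
the joint law of the dependent quantile pyramids at the finite set of covariate values exists
as the limit of the finite-level constructions. -/
lemma aux_one_sided {F G : ℝ → ℝ} (hF : IsDistFunOn01 F) (hG : IsDistFunOn01 G)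
    {T : Finset ℝ} {ε : ℝ} (hε : 0 < ε)
    (hd : ∀ s ∈ Set.Ioo (0:ℝ) 1, ∃ τ ∈ T, |τ - s| < ε/2)
    (hsh : ∀ τ ∈ T, ∃ y, F y = τ ∧ G y = τ) :
    ∀ y, G y ≤ F y + ε := by
  intro y
  by_contra hlt
  push_neg at hlt
  have hF0 : 0 ≤ F y := (hF.2.2.1 y).1
  have hG1 : G y ≤ 1 := (hG.2.2.1 y).2
  obtain ⟨τ, hτT, hτ⟩ := hd (F y + ε/2) ⟨by linarith, by linarith⟩
  rw [abs_lt] at hτ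
  obtain ⟨y0, hFy0, hGy0⟩ := hsh τ hτT
  have h1 : F y < τ := by linarith [hτ.1]
  have h2 : τ < G y := by linarith [hτ.2]
  have hyy0 : y < y0 := by
    by_contra hc
    push_neg at hc
    have := hF.1 hc
    rw [hFy0] at this
    linarith
  have := hG.1 hyy0.le
  rw [hGy0] at this
  linarith

lemma levyDist_le_of_forall_abs_le {F G : ℝ → ℝ} (hF : Monotone F) {ε : ℝ} (hε : 0 ≤ ε)
    (h : ∀ y, |F y - G y| ≤ ε) : levyDist F G ≤ ε := by
  apply le_of_forall_pos_le_add
  intro t ht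
  apply csInf_le
  · exact ⟨0, fun r hr => hr.1.le⟩
  · refine ⟨by linarith, fun y => ?_⟩
    have h1 := abs_le.1 (h y)
    have m1 : F (y - (ε + t)) ≤ F y := hF (by linarith)
    have m2 : F y ≤ F (y + (ε + t)) := hF (by linarith)
    constructor <;> linarith [h1.1, h1.2]

theorem pushforward_tendsto_limit_in_prokhorov_sup
    {Ω S : Type*} [MeasurableSpace Ω] (μ : Measure Ω) [IsProbabilityMeasure μ]
    [Fintype S] [Nonempty S]
    [MetricSpace (S → DistFun01)] [MeasurableSpace (S → DistFun01)]
    [BorelSpace (S → DistFun01)]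
    (hdist : ∀ F G : S → DistFun01, dist F G = ⨆ x : S, levyDist (F x).1 (G x).1)
    (𝒯 : ℕ → Finset ℝ)
    (h𝒯sub : ∀ m, 1 ≤ m → 𝒯 m ⊆ 𝒯 (m + 1))
    (h𝒯mem : ∀ m, 1 ≤ m → ∀ τ ∈ 𝒯 m, τ ∈ Set.Ioo (0 : ℝ) 1)
    (hdense : Set.Icc (0 : ℝ) 1 ⊆ closure (⋃ m ∈ Set.Ici 1, ((𝒯 m : Set ℝ))))
    (F : ℕ → Ω → S → DistFun01)
    (hFmeas : ∀ m, 1 ≤ m → Measurable (F m))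
    (hshare : ∀ (ω : Ω) (m n : ℕ), 1 ≤ m → m ≤ n → ∀ x : S, ∀ τ ∈ 𝒯 m,
      ∃ y : ℝ, (F m ω x).1 y = τ ∧ (F n ω x).1 y = τ) :
    ∃ μ_inf : Measure (S → DistFun01), IsProbabilityMeasure μ_inf ∧
      Filter.Tendsto (fun m : ℕ => levyProkhorovDist (μ.map (F m)) μ_inf)
        Filter.atTop (nhds 0) := by
  -- nestedness of the 𝒯
  have hsubmono : ∀ m n, 1 ≤ m → m ≤ n → 𝒯 m ⊆ 𝒯 n := by
    intro m n hm hmn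
    induction n with
    | zero => exact absurd hmn (by omega)
    | succ k ih =>
      rcases Nat.lt_or_ge m (k+1) with h | h
      · have hk : m ≤ k := by omega
        have h1k : 1 ≤ k := by omega
        exact (ih hk).trans (h𝒯sub k h1k)
      · have : m = k + 1 := by omega
        subst this
        exact fun τ hτ => hτ
  -- uniform density of a single 𝒯 M
  have hdense2 : ∀ ε : ℝ, 0 < ε → ∃ M, 1 ≤ M ∧
      ∀ s ∈ Set.Ioo (0:ℝ) 1, ∃ τ ∈ 𝒯 M, |τ - s| < ε := by
    intro ε hε
    set U : ℕ → Set ℝ := fun m => ⋃ τ ∈ 𝒯 (m+1), Metric.ball τ ε with hU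
    have hopen : ∀ m, IsOpen (U m) := fun m => isOpen_biUnion fun τ _ => Metric.isOpen_ball
    have hcov : Set.Icc (0:ℝ) 1 ⊆ ⋃ m, U m := by
      intro s hs
      have := hdense hs
      rw [Metric.mem_closure_iff] at this
      obtain ⟨b, hb, hbd⟩ := this ε hε
      simp only [Set.mem_iUnion] at hb
      obtain ⟨m, hm1, hbm⟩ := hb
      have hm1' : 1 ≤ m := hm1
      refine Set.mem_iUnion.2 ⟨m - 1, ?_⟩
      have : m - 1 + 1 = m := by omega
      rw [hU]
      simp only [Set.mem_iUnion]
      refine ⟨b, ?_, ?_⟩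
      · rw [this]; exact hbm
      · exact Metric.mem_ball.mpr hbd
    obtain ⟨t, ht⟩ := isCompact_Icc.elim_finite_subcover U hopen hcov
    refine ⟨t.sup id + 1, by omega, ?_⟩
    intro s hs
    have := ht (Set.Ioo_subset_Icc_self hs)
    simp only [Set.mem_iUnion] at this
    obtain ⟨m, hmt, hsm⟩ := this
    rw [hU] at hsm
    simp only [Set.mem_iUnion] at hsm
    obtain ⟨τ, hτm, hτb⟩ := hsm
    have hms : m ≤ t.sup id := Finset.le_sup (f := id) hmt
    refine ⟨τ, hsubmono (m+1) (t.sup id + 1) (by omega) (by omega) hτm, ?_⟩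
    rw [Metric.mem_ball, Real.dist_eq] at hτb
    rwa [abs_sub_comm]
  -- uniform Cauchy estimate
  have hcauchy : ∀ ε : ℝ, 0 < ε → ∃ M, 1 ≤ M ∧ ∀ m n, M ≤ m → m ≤ n →
      ∀ (ω : Ω) (x : S) (y : ℝ), |(F m ω x).1 y - (F n ω x).1 y| ≤ ε := by
    intro ε hε
    obtain ⟨M, hM1, hM⟩ := hdense2 (ε/2) (by linarith)
    refine ⟨M, hM1, fun m n hMm hmn ω x y => ?_⟩
    have h1m : 1 ≤ m := le_trans hM1 hMm
    have hd : ∀ s ∈ Set.Ioo (0:ℝ) 1, ∃ τ ∈ 𝒯 m, |τ - s| < ε/2 := by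
      intro s hs
      obtain ⟨τ, hτ, hτd⟩ := hM s hs
      exact ⟨τ, hsubmono M m hM1 hMm hτ, hτd⟩
    have hsh : ∀ τ ∈ 𝒯 m, ∃ y, (F m ω x).1 y = τ ∧ (F n ω x).1 y = τ :=
      fun τ hτ => hshare ω m n h1m hmn x τ hτ
    have hsh' : ∀ τ ∈ 𝒯 m, ∃ y, (F n ω x).1 y = τ ∧ (F m ω x).1 y = τ :=
      fun τ hτ => (hsh τ hτ).imp fun y hy => ⟨hy.2, hy.1⟩
    have hb1 := aux_one_sided (F m ω x).2 (F n ω x).2 hε hd hsh y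
    have hb2 := aux_one_sided (F n ω x).2 (F m ω x).2 hε hd hsh' y
    rw [abs_le]
    constructor <;> linarith
  -- pointwise limits exist
  have hex : ∀ (ω : Ω) (x : S) (y : ℝ),
      ∃ l : ℝ, Tendsto (fun m => (F m ω x).1 y) atTop (𝓝 l) := by
    intro ω x y
    apply cauchySeq_tendsto_of_complete
    rw [Metric.cauchySeq_iff]
    intro ε hε
    obtain ⟨M, _, hM⟩ := hcauchy (ε/2) (by linarith)
    refine ⟨M, fun m hm n hn => ?_⟩
    rcases le_total m n with h | h
    · rw [Real.dist_eq]
      exact lt_of_le_of_lt (hM m n hm h ω x y) (by linarith)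
    · rw [Real.dist_eq, abs_sub_comm]
      exact lt_of_le_of_lt (hM n m hn h ω x y) (by linarith)
  choose g hg using hex
  -- uniform convergence to the limit
  have hunif : ∀ ε : ℝ, 0 < ε → ∃ M, 1 ≤ M ∧ ∀ m, M ≤ m →
      ∀ (ω : Ω) (x : S) (y : ℝ), |(F m ω x).1 y - g ω x y| ≤ ε := by
    intro ε hε
    obtain ⟨M, hM1, hM⟩ := hcauchy ε hε
    refine ⟨M, hM1, fun m hm ω x y => ?_⟩
    have ht : Tendsto (fun n => |(F m ω x).1 y - (F n ω x).1 y|) atTop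
        (𝓝 |(F m ω x).1 y - g ω x y|) := (tendsto_const_nhds.sub (hg ω x y)).abs
    apply le_of_tendsto ht
    filter_upwards [eventually_ge_atTop m] with n hn
    exact hM m n hm hn ω x y
  -- the limit is a distribution function
  have hLdf : ∀ (ω : Ω) (x : S), IsDistFunOn01 (g ω x) := by
    intro ω x
    refine ⟨?_, ?_, ?_, ?_, ?_⟩
    · intro a b hab
      exact le_of_tendsto_of_tendsto' (hg ω x a) (hg ω x b) fun m => (F m ω x).2.1 hab
    · intro y
      rw [Metric.continuousWithinAt_iff]
      intro ε hε
      obtain ⟨M, hM1, hM⟩ := hunif (ε/3) (by linarith)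
      have hc := (F M ω x).2.2.1 y
      rw [Metric.continuousWithinAt_iff] at hc
      obtain ⟨δ, hδ, hc⟩ := hc (ε/3) (by linarith)
      refine ⟨δ, hδ, fun {z} hz hzd => ?_⟩
      have b1 := abs_le.1 (hM M le_rfl ω x z)
      have b2 := abs_le.1 (hM M le_rfl ω x y)
      have hc' := hc hz hzd
      rw [Real.dist_eq] at hc'
      have b3 := abs_lt.1 hc'
      rw [Real.dist_eq, abs_lt]
      constructor <;> linarith [b1.1, b1.2, b2.1, b2.2, b3.1, b3.2]
    · intro y
      apply isClosed_Icc.mem_of_tendsto (hg ω x y)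
      filter_upwards with m using (F m ω x).2.2.2.1 y
    · intro y hy
      have heq : (fun m => (F m ω x).1 y) = fun _ => (0:ℝ) :=
        funext fun m => (F m ω x).2.2.2.2.1 y hy
      exact tendsto_nhds_unique (hg ω x y) (heq ▸ tendsto_const_nhds)
    · intro y hy
      have heq : (fun m => (F m ω x).1 y) = fun _ => (1:ℝ) :=
        funext fun m => (F m ω x).2.2.2.2.2 y hy
      exact tendsto_nhds_unique (hg ω x y) (heq ▸ tendsto_const_nhds)
  set L : Ω → (S → DistFun01) := fun ω x => ⟨g ω x, hLdf ω x⟩ with hLdef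
  -- distance bound to the limit map
  have hdistb : ∀ ε : ℝ, 0 < ε → ∃ M, 1 ≤ M ∧ ∀ m, M ≤ m →
      ∀ ω : Ω, dist (F m ω) (L ω) ≤ ε := by
    intro ε hε
    obtain ⟨M, hM1, hM⟩ := hunif ε hε
    refine ⟨M, hM1, fun m hm ω => ?_⟩
    rw [hdist]
    exact ciSup_le fun x =>
      levyDist_le_of_forall_abs_le (F m ω x).2.1 hε.le (fun y => hM m hm ω x y)
  have htend : ∀ ω : Ω, Tendsto (fun m => F m ω) atTop (𝓝 (L ω)) := by
    intro ω
    rw [Metric.tendsto_atTop]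
    intro ε hε
    obtain ⟨M, _, hM⟩ := hdistb (ε/2) (by linarith)
    exact ⟨M, fun m hm => lt_of_le_of_lt (hM m hm ω) (by linarith)⟩
  -- the limit map is measurable
  have hLmeas : Measurable L := by
    apply measurable_of_tendsto_metrizable' atTop (f := fun m => F (m+1))
      (fun m => hFmeas (m+1) (by omega))
    rw [tendsto_pi_nhds]
    intro ω
    exact (htend ω).comp (tendsto_add_atTop_nat 1)
  refine ⟨μ.map L, Measure.isProbabilityMeasure_map hLmeas.aemeasurable, ?_⟩
  -- Prokhorov distance bound
  have hprok : ∀ ε : ℝ, 0 < ε → ∃ M, 1 ≤ M ∧ ∀ m, M ≤ m →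
      levyProkhorovDist (μ.map (F m)) (μ.map L) ≤ ε := by
    intro ε hε
    obtain ⟨M, hM1, hM⟩ := hdistb ε hε
    refine ⟨M, hM1, fun m hm => ?_⟩
    have h1m : 1 ≤ m := le_trans hM1 hm
    have hedist : levyProkhorovEDist (μ.map (F m)) (μ.map L) ≤ ENNReal.ofReal ε := by
      apply levyProkhorovEDist_le_of_forall
      intro ε' B hε' hε'top hB
      have hεε' : ε < ε'.toReal := by
        have := ENNReal.toReal_strict_mono hε'top.ne hε'
        rwa [ENNReal.toReal_ofReal hε.le] at this
      have hthick : MeasurableSet (Metric.thickening ε'.toReal B) :=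
        Metric.isOpen_thickening.measurableSet
      constructor
      · rw [Measure.map_apply (hFmeas m h1m) hB,
          Measure.map_apply hLmeas hthick]
        refine le_add_of_le_of_nonneg (measure_mono ?_) zero_le
        intro ω hω
        rw [Set.mem_preimage, Metric.mem_thickening_iff]
        exact ⟨F m ω, hω, lt_of_le_of_lt (by rw [dist_comm]; exact hM m hm ω) hεε'⟩
      · rw [Measure.map_apply hLmeas hB,
          Measure.map_apply (hFmeas m h1m) hthick]
        refine le_add_of_le_of_nonneg (measure_mono ?_) zero_le
        intro ω hω
        rw [Set.mem_preimage, Metric.mem_thickening_iff]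
        exact ⟨L ω, hω, lt_of_le_of_lt (hM m hm ω) hεε'⟩
    have : IsProbabilityMeasure (μ.map (F m)) :=
      Measure.isProbabilityMeasure_map (hFmeas m h1m).aemeasurable
    have : IsProbabilityMeasure (μ.map L) :=
      Measure.isProbabilityMeasure_map hLmeas.aemeasurable
    calc levyProkhorovDist (μ.map (F m)) (μ.map L)
        ≤ (ENNReal.ofReal ε).toReal :=
          ENNReal.toReal_mono ENNReal.ofReal_ne_top hedist
      _ = ε := ENNReal.toReal_ofReal hε.le
  -- conclude
  rw [Metric.tendsto_atTop]
  intro ε hε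
  obtain ⟨M, _, hM⟩ := hprok (ε/2) (by linarith)
  refine ⟨M, fun m hm => ?_⟩
  have hnn : (0:ℝ) ≤ levyProkhorovDist (μ.map (F m)) (μ.map L) := ENNReal.toReal_nonneg
  rw [Real.dist_eq, sub_zero, abs_of_nonneg hnn]
  exact lt_of_le_of_lt (hM m hm) (by linarith)
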